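/- The function δ(t) = F(t) - (F₀(t) - C)/(1 + C F₀(t)) satisfies the linear ODE dδ/dt = (1/2) e^{iφ₀} · ((1 + C·conj(F₀))/(1 + C F₀)) · (conj(δ) - δ). Hence if δ(0) = 0 then δ ≡ 0. -/

import Mathlib

open Complex Set


private lemma stmt6_im_aux (E z : ℂ) :
    -Complex.I * E * ((z.im : ℝ) : ℂ) = E * ((starRingEnd ℂ) z - z) / 2 := by
  have h := Complex.sub_conj z
  push_cast at h
  linear_combination (E / 2) * h

theorem stmt6 (φ φ₀ : ℝ → ℝ) (F F₀ : ℝ → ℂ) (C : ℝ)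
    (hF : ∀ t, HasDerivAt F
      (-Complex.I * Complex.exp (Complex.I * φ t) * (((F t).im : ℝ) : ℂ)) t)
    (hF₀ : ∀ t, HasDerivAt F₀
      (-Complex.I * Complex.exp (Complex.I * φ₀ t) * (((F₀ t).im : ℝ) : ℂ)) t)
    (hden : ∀ t, 1 + (C : ℂ) * F₀ t ≠ 0)
    (hrel : ∀ t, Complex.exp (Complex.I * φ t) =
      Complex.exp (Complex.I * φ₀ t) *
        ((1 + (C : ℂ) * (starRingEnd ℂ) (F₀ t)) / (1 + (C : ℂ) * F₀ t))) :
    (∀ t, HasDerivAt (fun s => F s - (F₀ s - C) / (1 + (C : ℂ) * F₀ s))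
      ((1 / 2) * Complex.exp (Complex.I * φ₀ t) *
        ((1 + (C : ℂ) * (starRingEnd ℂ) (F₀ t)) / (1 + (C : ℂ) * F₀ t)) *
        ((starRingEnd ℂ) (F t - (F₀ t - C) / (1 + (C : ℂ) * F₀ t)) -
          (F t - (F₀ t - C) / (1 + (C : ℂ) * F₀ t)))) t) ∧
    (F 0 - (F₀ 0 - C) / (1 + (C : ℂ) * F₀ 0) = 0 →
      ∀ t, F t - (F₀ t - C) / (1 + (C : ℂ) * F₀ t) = 0) := by
  have hden' : ∀ t, 1 + (C : ℂ) * (starRingEnd ℂ) (F₀ t) ≠ 0 := by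
    intro t
    have : (starRingEnd ℂ) (1 + (C : ℂ) * F₀ t) = 1 + (C : ℂ) * (starRingEnd ℂ) (F₀ t) := by
      simp [map_add, map_mul, Complex.conj_ofReal]
    rw [← this, map_ne_zero]
    exact hden t
  have key : ∀ t, HasDerivAt (fun s => F s - (F₀ s - C) / (1 + (C : ℂ) * F₀ s))
      ((1 / 2) * Complex.exp (Complex.I * φ₀ t) *
        ((1 + (C : ℂ) * (starRingEnd ℂ) (F₀ t)) / (1 + (C : ℂ) * F₀ t)) *
        ((starRingEnd ℂ) (F t - (F₀ t - C) / (1 + (C : ℂ) * F₀ t)) -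
          (F t - (F₀ t - C) / (1 + (C : ℂ) * F₀ t)))) t := by
    intro t
    have hq : HasDerivAt (fun s => (F₀ s - C) / (1 + (C : ℂ) * F₀ s))
        (((-Complex.I * Complex.exp (Complex.I * φ₀ t) * (((F₀ t).im : ℝ) : ℂ)) *
            (1 + (C : ℂ) * F₀ t) -
          (F₀ t - C) * ((C : ℂ) * (-Complex.I * Complex.exp (Complex.I * φ₀ t) *
            (((F₀ t).im : ℝ) : ℂ)))) / (1 + (C : ℂ) * F₀ t) ^ 2) t := by
      exact ((hF₀ t).sub_const _).div (((hF₀ t).const_mul (C : ℂ)).const_add 1) (hden t)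
    have h := (hF t).sub hq
    refine h.congr_deriv ?_
    symm
    rw [hrel t]
    set a := F t
    set b := F₀ t
    set E := Complex.exp (Complex.I * φ₀ t)
    rw [stmt6_im_aux (E * ((1 + (C : ℂ) * (starRingEnd ℂ) b) / (1 + (C : ℂ) * b))) a,
      stmt6_im_aux E b]
    simp only [map_sub, map_div₀, map_add, map_mul, map_one, Complex.conj_ofReal]
    set ac := (starRingEnd ℂ) a
    set bc := (starRingEnd ℂ) b
    have h1 : (1 : ℂ) + (C : ℂ) * b ≠ 0 := hden t
    have h2 : (1 : ℂ) + (C : ℂ) * bc ≠ 0 := hden' t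
    field_simp
    ring
  refine ⟨key, ?_⟩
  intro h0 t
  -- uniqueness via Gronwall
  set k : ℝ → ℂ := fun s => (1 / 2) * Complex.exp (Complex.I * φ₀ s) *
      ((1 + (C : ℂ) * (starRingEnd ℂ) (F₀ s)) / (1 + (C : ℂ) * F₀ s)) with hk
  set δ : ℝ → ℂ := fun s => F s - (F₀ s - C) / (1 + (C : ℂ) * F₀ s) with hδ
  set v : ℝ → ℂ → ℂ := fun s x => k s * ((starRingEnd ℂ) x - x) with hv
  have hknorm : ∀ s, ‖k s‖ = 1 / 2 := by
    intro s
    have he : ‖Complex.exp (Complex.I * φ₀ s)‖ = 1 := by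
      rw [Complex.norm_exp]
      simp
    have hr : ‖(1 + (C : ℂ) * (starRingEnd ℂ) (F₀ s)) / (1 + (C : ℂ) * F₀ s)‖ = 1 := by
      have : (1 : ℂ) + (C : ℂ) * (starRingEnd ℂ) (F₀ s) =
          (starRingEnd ℂ) (1 + (C : ℂ) * F₀ s) := by
        simp [map_add, map_mul, Complex.conj_ofReal]
      rw [norm_div, this, RCLike.norm_conj, div_self (norm_ne_zero_iff.mpr (hden s))]
    rw [hk]
    simp only [norm_mul, he, hr]
    norm_num
  have hlip : ∀ s, LipschitzWith 1 (v s) := by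
    intro s
    apply LipschitzWith.of_dist_le_mul
    intro x y
    simp only [hv, dist_eq_norm]
    rw [← mul_sub, norm_mul, hknorm s]
    have : (starRingEnd ℂ) x - x - ((starRingEnd ℂ) y - y) =
        (starRingEnd ℂ) (x - y) - (x - y) := by
      rw [map_sub]; ring
    rw [this]
    have hb : ‖(starRingEnd ℂ) (x - y) - (x - y)‖ ≤ ‖x - y‖ + ‖x - y‖ := by
      calc ‖(starRingEnd ℂ) (x - y) - (x - y)‖ ≤ ‖(starRingEnd ℂ) (x - y)‖ + ‖x - y‖ :=
            norm_sub_le _ _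
        _ = ‖x - y‖ + ‖x - y‖ := by rw [RCLike.norm_conj]
    simp only [NNReal.coe_one, one_mul]
    linarith [hb]
  have hmem : t ∈ Ioo (-(|t| + 1)) (|t| + 1) :=
    ⟨by nlinarith [neg_abs_le t, abs_nonneg t], by nlinarith [le_abs_self t, abs_nonneg t]⟩
  have h0mem : (0 : ℝ) ∈ Ioo (-(|t| + 1)) (|t| + 1) :=
    ⟨by nlinarith [abs_nonneg t], by nlinarith [abs_nonneg t]⟩
  have := ODE_solution_unique_of_mem_Ioo (s := fun _ => (univ : Set ℂ))
    (fun s _ => (hlip s).lipschitzOnWith) h0mem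
    (f := δ) (g := fun _ => 0)
    (fun s _ => ⟨key s, trivial⟩)
    (fun s _ => ⟨by simpa [hv] using hasDerivAt_const s (0 : ℂ), trivial⟩)
    h0
  exact this hmem
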